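/- Let M ∈ ℂ^{n×n} be positive semidefinite and let k be an integer with 1 ≤ k ≤ n. For each subset J ⊆ {1,…,n}, let T_J := range(M) ∩ {v ∈ ℂ^n : v_j = 0 for all j ∈ J}. Then M is k-incoherent if and only if there exists a family of positive semidefinite matrices (M_J), indexed by the subsets J ⊆ {1,…,n} with |J| = n − k, such that M = ∑_J M_J and range(M_J) ⊆ T_J for every such J. -/

import Mathlib

open Matrix BigOperators Finset ComplexOrder

noncomputable section

/-- The number of nonzero entries of a vector in `ℂ^n`. -/
def suppCard {n : ℕ} (v : Fin n → ℂ) : ℕ :=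
  (Finset.univ.filter fun i => v i ≠ 0).card

/-- A matrix `X` is `k`-incoherent if it can be written as `∑ vᵢ vᵢ*` where each `vᵢ`
has at most `k` nonzero entries. -/
def KIncoherent {n : ℕ} (k : ℕ) (X : Matrix (Fin n) (Fin n) ℂ) : Prop :=
  ∃ (m : ℕ) (v : Fin m → (Fin n → ℂ)),
    (∀ i, suppCard (v i) ≤ k) ∧ X = ∑ i, vecMulVec (v i) (star (v i))

/-- The set `I_k` of positive semidefinite, `k`-incoherent matrices with trace at most `1`. -/
def Ik (n k : ℕ) : Set (Matrix (Fin n) (Fin n) ℂ) :=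
  {X | X.PosSemidef ∧ KIncoherent k X ∧ X.trace.re ≤ 1}

/-- The Gram matrix of a list of vectors in `ℂ^d`. -/
def gramMatrix {n d : ℕ} (ψ : Fin n → (Fin d → ℂ)) : Matrix (Fin n) (Fin n) ℂ :=
  Matrix.of fun i j => star (ψ i) ⬝ᵥ ψ j

/-- A list of states `ψ₁, …, ψₙ` is `k`-learnable if there is a POVM indexed by the
`k`-element subsets of `{1, …, n}` such that `⟨ψᵢ, M_S ψᵢ⟩ = 0` whenever `i ∉ S`. -/
def KLearnable {n d : ℕ} (k : ℕ) (ψ : Fin n → (Fin d → ℂ)) : Prop :=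
  ∃ M : {S : Finset (Fin n) // S.card = k} → Matrix (Fin d) (Fin d) ℂ,
    (∀ S, (M S).PosSemidef) ∧ (∑ S, M S) = 1 ∧
    ∀ (S : {S : Finset (Fin n) // S.card = k}) (i : Fin n),
      i ∉ S.val → star (ψ i) ⬝ᵥ ((M S) *ᵥ ψ i) = 0

/-- The Frobenius norm of a square complex matrix. -/
def frobNorm {m : ℕ} (A : Matrix (Fin m) (Fin m) ℂ) : ℝ :=
  Real.sqrt (∑ i, ∑ j, ‖A i j‖ ^ 2)

/-- An outer product `v v*` is positive semidefinite. -/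
lemma posSemidef_outer {n : ℕ} (v : Fin n → ℂ) :
    (vecMulVec v (star v)).PosSemidef := by
  exact posSemidef_vecMulVec_self_star v

lemma outer_mulVec {n : ℕ} (v w x : Fin n → ℂ) :
    vecMulVec v w *ᵥ x = (w ⬝ᵥ x) • v := by
  ext j
  simp [vecMulVec, mulVec, dotProduct, Finset.mul_sum, mul_comm, mul_left_comm]

/-- `range((BᴴB)·) = range(Bᴴ·)`. -/
lemma range_conjTranspose_mul_self {m n : ℕ} (B : Matrix (Fin m) (Fin n) ℂ) :
    LinearMap.range (Bᴴ * B).mulVecLin = LinearMap.range Bᴴ.mulVecLin := by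
  apply Submodule.eq_of_le_of_finrank_le
  · rintro x ⟨y, rfl⟩
    exact ⟨B *ᵥ y, by simp [mulVecLin_apply, Matrix.mulVec_mulVec]⟩
  · show (Bᴴ).rank ≤ (Bᴴ * B).rank
    rw [Matrix.rank_conjTranspose, Matrix.rank_conjTranspose_mul_self]

/-- Every vector in a sum-of-outer-products decomposition lies in the range. -/
lemma mem_range_of_outer_sum {n m : ℕ} (v : Fin m → Fin n → ℂ)
    (M : Matrix (Fin n) (Fin n) ℂ)
    (hMv : M = ∑ i, vecMulVec (v i) (star (v i))) (i : Fin m) :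
    v i ∈ LinearMap.range M.mulVecLin := by
  set B : Matrix (Fin m) (Fin n) ℂ := Matrix.of fun i j => star (v i j) with hB
  have hMB : M = Bᴴ * B := by
    rw [hMv]
    ext j l
    rw [Matrix.sum_apply, Matrix.mul_apply]
    refine Finset.sum_congr rfl fun a _ => ?_
    simp [vecMulVec, hB, conjTranspose_apply, Pi.star_apply]
  rw [hMB, range_conjTranspose_mul_self]
  refine ⟨Pi.single i 1, ?_⟩
  ext j
  rw [mulVecLin_apply, Matrix.mulVec_single_one]
  simp [hB, conjTranspose_apply]

lemma sum_mulVec' {n : ℕ} {α : Type*} (s : Finset α) (A : α → Matrix (Fin n) (Fin n) ℂ)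
    (x : Fin n → ℂ) : (∑ i ∈ s, A i) *ᵥ x = ∑ i ∈ s, A i *ᵥ x := by
  ext j
  rw [Finset.sum_apply]
  simp only [mulVec, dotProduct, Matrix.sum_apply, Finset.sum_mul]
  exact Finset.sum_comm

lemma conj_mul_self_eq_zero {b : ℂ} (h : (starRingEnd ℂ) b * b = 0) : b = 0 := by
  have : (Complex.normSq b : ℂ) = 0 := by rw [Complex.normSq_eq_conj_mul_self, h]
  exact Complex.normSq_eq_zero.mp (by exact_mod_cast this)

open scoped MatrixOrder in
lemma posSemidef_iff_eq_transpose_mul_self {n : ℕ} {A : Matrix (Fin n) (Fin n) ℂ} :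
    A.PosSemidef ↔ ∃ B : Matrix (Fin n) (Fin n) ℂ, A = Bᴴ * B := by
  constructor
  · intro hA
    obtain ⟨X, hX, -, h⟩ := sub_zero A ▸
      CFC.exists_sqrt_of_isSelfAdjoint_of_quasispectrumRestricts hA.isHermitian
        (QuasispectrumRestricts.nnreal_of_nonneg hA.nonneg)
    exact ⟨X, by rw [sub_zero] at h; rw [← h]; exact congrArg (· * X) hX.star_eq.symm⟩
  · rintro ⟨B, rfl⟩
    exact posSemidef_conjTranspose_mul_self B

/-- A PSD matrix `M` is `k`-incoherent iff it can be written as a sum of PSD matrices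
`M_J`, indexed by the `(n-k)`-element subsets `J`, with `range(M_J) ⊆ range(M) ∩ {v : v_j = 0 ∀ j ∈ J}`. -/
theorem kIncoherent_iff_subspace_decomposition (n k : ℕ) (hk : 1 ≤ k) (hkn : k ≤ n)
    (M : Matrix (Fin n) (Fin n) ℂ) (hM : M.PosSemidef) :
    KIncoherent k M ↔
      ∃ W : {J : Finset (Fin n) // J.card = n - k} → Matrix (Fin n) (Fin n) ℂ,
        (∀ J, (W J).PosSemidef) ∧ M = ∑ J, W J ∧
        ∀ J : {J : Finset (Fin n) // J.card = n - k},
          (LinearMap.range (W J).mulVecLin : Set (Fin n → ℂ)) ⊆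
            (LinearMap.range M.mulVecLin : Set (Fin n → ℂ)) ∩
              {v : Fin n → ℂ | ∀ j ∈ J.val, v j = 0} := by
  classical
  constructor
  · rintro ⟨m, v, hsupp, hsum⟩
    choose S hS1 hS2 hS3 using fun i =>
      Finset.exists_subsuperset_card_eq
        (Finset.subset_univ (Finset.univ.filter fun j => v i j ≠ 0))
        (hsupp i) (by simpa using hkn)
    set f : Fin m → {J : Finset (Fin n) // J.card = n - k} :=
      fun i => ⟨(S i)ᶜ, by simp [Finset.card_compl, hS3]⟩ with hf
    set W : {J : Finset (Fin n) // J.card = n - k} → Matrix (Fin n) (Fin n) ℂ :=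
      fun J => ∑ i ∈ Finset.univ.filter fun i => f i = J,
        vecMulVec (v i) (star (v i)) with hWdef
    have hvz : ∀ (J) (i), f i = J → ∀ j ∈ J.val, v i j = 0 := by
      intro J i hi j hj
      by_contra hne
      have hjS : j ∈ S i := hS1 i (Finset.mem_filter.mpr ⟨Finset.mem_univ j, hne⟩)
      rw [← hi] at hj
      exact (Finset.mem_compl.mp hj) hjS
    refine ⟨W, fun J => ?_, ?_, ?_⟩
    · exact Finset.sum_induction _ _ (fun a b ha hb => ha.add hb)
        Matrix.PosSemidef.zero (fun i _ => posSemidef_outer (v i))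
    · rw [hsum]
      exact (Finset.sum_fiberwise Finset.univ f _).symm
    · intro J y hy
      obtain ⟨x, rfl⟩ := hy
      have hexp : (W J).mulVecLin x
          = ∑ i ∈ Finset.univ.filter fun i => f i = J, (star (v i) ⬝ᵥ x) • v i := by
        rw [mulVecLin_apply, hWdef, sum_mulVec']
        exact Finset.sum_congr rfl fun i _ => outer_mulVec _ _ _
      constructor
      · show (W J).mulVecLin x ∈ (LinearMap.range M.mulVecLin : Set (Fin n → ℂ))
        rw [hexp]
        exact Submodule.sum_mem _ fun i _ =>
          Submodule.smul_mem _ _ (mem_range_of_outer_sum v M hsum i)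
      · intro j hj
        rw [hexp]
        rw [Finset.sum_apply]
        refine Finset.sum_eq_zero fun i hi => ?_
        have : v i j = 0 :=
          hvz J i (Finset.mem_filter.mp hi).2 j hj
        simp [this]
  · rintro ⟨W, hW, hMsum, hrange⟩
    choose B hB using fun J => posSemidef_iff_eq_transpose_mul_self.mp (hW J)
    have hrow : ∀ J, ∀ j ∈ J.val, ∀ l, W J j l = 0 := by
      intro J j hj l
      have hmem := hrange J (show (W J).mulVecLin (Pi.single l 1) ∈
        (LinearMap.range (W J).mulVecLin : Set (Fin n → ℂ)) from ⟨Pi.single l 1, rfl⟩)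
      have h0 := hmem.2 j hj
      simpa [mulVecLin_apply, Matrix.mulVec_single_one] using h0
    have hBzero : ∀ J i, ∀ j ∈ J.val, B J i j = 0 := by
      intro J i j hj
      have hd : W J j j = 0 := hrow J j hj j
      rw [hB J, Matrix.mul_apply] at hd
      have hterm : ∀ a ∈ Finset.univ, (0:ℂ) ≤ (B J)ᴴ j a * B J a j := fun a _ => by
        rw [conjTranspose_apply]; exact star_mul_self_nonneg _
      have h0 := (Finset.sum_eq_zero_iff_of_nonneg hterm).mp hd i (Finset.mem_univ i)
      rw [conjTranspose_apply] at h0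
      exact conj_mul_self_eq_zero h0
    set ι := {J : Finset (Fin n) // J.card = n - k} × Fin n with hι
    set w : ι → (Fin n → ℂ) := fun p j => star (B p.1 p.2 j) with hw
    have hWsum : ∀ J, W J = ∑ i : Fin n, vecMulVec (w (J, i)) (star (w (J, i))) := by
      intro J
      rw [hB J]
      ext j l
      rw [Matrix.mul_apply, Matrix.sum_apply]
      refine Finset.sum_congr rfl fun a _ => ?_
      simp [vecMulVec, hw, conjTranspose_apply]
    let e := Fintype.equivFin ι
    refine ⟨Fintype.card ι, fun a => w (e.symm a), fun a => ?_, ?_⟩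
    · unfold suppCard
      set p := e.symm a with hp
      have hsub : (Finset.univ.filter fun j => w p j ≠ 0) ⊆ (p.1.val)ᶜ := by
        intro j hjmem
        rw [Finset.mem_filter] at hjmem
        rw [Finset.mem_compl]
        intro hjJ
        exact hjmem.2 (by simp [hw, hBzero p.1 p.2 j hjJ])
      calc (Finset.univ.filter fun j => w p j ≠ 0).card
          ≤ ((p.1.val)ᶜ).card := Finset.card_le_card hsub
        _ = n - (n - k) := by simp [Finset.card_compl, p.1.prop]
        _ = k := Nat.sub_sub_self hkn
    · rw [hMsum]
      calc ∑ J, W J = ∑ p : ι, vecMulVec (w p) (star (w p)) := by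
            rw [Fintype.sum_prod_type]
            exact Finset.sum_congr rfl fun J _ => hWsum J
        _ = _ := (Fintype.sum_equiv e.symm _ _ fun a => rfl).symm
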